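/- Let n and r be integers with r ≥ 1 and n ≥ r+3, and let f(x) = x³ − (n−r−2)x² − (n−1)x + r(n−r−2). Then f has exactly three real roots, they are pairwise distinct, and one lies in (−∞, 0), one lies in (0, √r), and one lies in (√r, +∞). -/
import Mathlib


set_option maxHeartbeats 1000000 in
/-- For integers `r ≥ 1` and `n ≥ r + 3`, the cubic
`f(x) = x³ - (n-r-2)x² - (n-1)x + r(n-r-2)` has exactly three real roots, pairwise
distinct, lying respectively in `(-∞, 0)`, `(0, √r)` and `(√r, +∞)`. -/
theorem stmt4 {n r : ℕ} (hr : 1 ≤ r) (hn : r + 3 ≤ n)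
    (f : ℝ → ℝ)
    (hf : f = fun x => x ^ 3 - ((n : ℝ) - r - 2) * x ^ 2 - ((n : ℝ) - 1) * x
      + r * ((n : ℝ) - r - 2)) :
    ∃ a b c : ℝ, a < 0 ∧ 0 < b ∧ b < Real.sqrt r ∧ Real.sqrt r < c ∧
      f a = 0 ∧ f b = 0 ∧ f c = 0 ∧
      a ≠ b ∧ a ≠ c ∧ b ≠ c ∧
      (∀ x : ℝ, f x = 0 → x = a ∨ x = b ∨ x = c) := by
  have hr' : (1:ℝ) ≤ r := by exact_mod_cast hr
  have hn' : (r:ℝ) + 3 ≤ n := by exact_mod_cast hn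
  set S : ℝ := (n:ℝ) - r - 2 with hSdef
  set T : ℝ := (n:ℝ) - 1 with hTdef
  have hS1 : 1 ≤ S := by rw [hSdef]; linarith
  have hT1 : (r:ℝ) + 2 ≤ T := by rw [hTdef]; linarith
  have hfx : ∀ x : ℝ, f x = x ^ 3 - S * x ^ 2 - T * x + r * S := by
    intro x; rw [hf]
  have hcont : Continuous f := by rw [hf]; continuity
  have hr0 : (0:ℝ) < r := by linarith
  have hs0 : 0 < Real.sqrt r := Real.sqrt_pos.2 hr0
  have hsq : Real.sqrt r ^ 2 = r := Real.sq_sqrt (le_of_lt hr0)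
  have hs1 : 1 ≤ Real.sqrt r := by nlinarith [hs0]
  have hsr : Real.sqrt r ≤ r := by nlinarith
  -- values of f
  have hf0 : f 0 = r * S := by rw [hfx]; ring
  have hf0pos : 0 < f 0 := by rw [hf0]; nlinarith
  have hfs : f (Real.sqrt r) = Real.sqrt r * ((r:ℝ) - T) := by
    rw [hfx]; linear_combination (Real.sqrt r - S) * hsq
  have hfsneg : f (Real.sqrt r) < 0 := by
    rw [hfs]; nlinarith
  set M : ℝ := 1 + S + T + r * S with hMdef
  have hM1 : 1 + S + T ≤ M := by rw [hMdef]; nlinarith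
  have hMpos : 0 < M := by nlinarith
  have hsM : Real.sqrt r < M := by
    have : (r:ℝ) ≤ r * S := by nlinarith
    nlinarith
  have hM1' : 1 ≤ M := by rw [hMdef]; nlinarith
  have hrS : 0 ≤ r * S := by nlinarith
  have hT0 : 0 ≤ T := by linarith
  have hfM : 0 < f M := by
    have e : f M = M ^ 2 * (M - S) - T * M + r * S := by rw [hfx]; ring
    have h2 : M - S - (1 + T) = r * S := by rw [hMdef]; ring
    have h3 : M * (1 + T) ≤ M ^ 2 * (M - S) := by
      nlinarith [mul_nonneg (sq_nonneg M) hrS,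
        mul_nonneg (show (0:ℝ) ≤ M ^ 2 - M by nlinarith) (show (0:ℝ) ≤ 1 + T by linarith)]
    nlinarith
  have hfnM : f (-M) < 0 := by
    have e : f (-M) = -(M ^ 2 * (M + S)) + T * M + r * S := by rw [hfx]; ring
    have h2 : M * (1 + T + r * S) ≤ M ^ 2 := by
      have : M ^ 2 = M * (1 + S + T + r * S) := by rw [hMdef]; ring
      nlinarith
    have h3 : M ^ 2 ≤ M ^ 2 * (M + S) := by nlinarith [sq_nonneg M]
    nlinarith
  have hnM0 : -M < 0 := by linarith
  -- three roots via IVT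
  obtain ⟨a, haI, hfa⟩ :=
    intermediate_value_Ioo (le_of_lt hnM0) hcont.continuousOn (by exact ⟨hfnM, hf0pos⟩ :
      (0:ℝ) ∈ Set.Ioo (f (-M)) (f 0))
  obtain ⟨b, hbI, hfb⟩ :=
    intermediate_value_Ioo' (le_of_lt hs0) hcont.continuousOn (by exact ⟨hfsneg, hf0pos⟩ :
      (0:ℝ) ∈ Set.Ioo (f (Real.sqrt r)) (f 0))
  obtain ⟨c, hcI, hfc⟩ :=
    intermediate_value_Ioo (le_of_lt hsM) hcont.continuousOn (by exact ⟨hfsneg, hfM⟩ :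
      (0:ℝ) ∈ Set.Ioo (f (Real.sqrt r)) (f M))
  obtain ⟨ha1, ha2⟩ := haI
  obtain ⟨hb1, hb2⟩ := hbI
  obtain ⟨hc1, hc2⟩ := hcI
  have hab : a < b := lt_trans ha2 hb1
  have hbc : b < c := lt_trans hb2 hc1
  have hac : a < c := lt_trans hab hbc
  -- key algebraic lemma
  have key : ∀ u v : ℝ, f u = 0 → f v = 0 → u ≠ v →
      u ^ 2 + u * v + v ^ 2 - S * (u + v) - T = 0 := by
    intro u v hu hv huv
    have h : (u - v) * (u ^ 2 + u * v + v ^ 2 - S * (u + v) - T) = 0 := by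
      have h1 := hfx u
      have h2 := hfx v
      rw [hu] at h1; rw [hv] at h2
      linear_combination -h1 + h2
    rcases mul_eq_zero.1 h with h' | h'
    · exact absurd (sub_eq_zero.1 h') huv
    · exact h'
  have kab := key a b hfa hfb (ne_of_lt hab)
  have kac := key a c hfa hfc (ne_of_lt hac)
  have hsum : a + b + c = S := by
    have h : (b - c) * (a + b + c - S) = 0 := by linear_combination kab - kac
    rcases mul_eq_zero.1 h with h' | h'
    · exact absurd (sub_eq_zero.1 h') (ne_of_lt hbc)
    · linarith [sub_eq_zero.1 (by linarith : a + b + c - S = 0)]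
  refine ⟨a, b, c, ha2, hb1, hb2, hc1, hfa, hfb, hfc,
    ne_of_lt hab, ne_of_lt hac, ne_of_lt hbc, ?_⟩
  intro x hx
  by_cases hxa : x = a
  · exact Or.inl hxa
  have kax := key a x hfa hx (fun h => hxa h.symm)
  have h : (x - b) * (x + b + a - S) = 0 := by linear_combination kax - kab
  rcases mul_eq_zero.1 h with h' | h'
  · exact Or.inr (Or.inl (sub_eq_zero.1 h'))
  · right; right; linarith
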